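/- Let K be a finite set of Avatars with per-Avatar power weights w : K → ℝ, w_k > 0 for all k, and let Q = (1/2)·Σ_{k∈K} w_k. For an assignment δ : K → {1,2} of Avatars to two cloudlets, let P_i(δ) = Σ_{k : δ(k)=i} w_k. Then there exists an assignment δ with max(P₁(δ) − Q, 0) + max(P₂(δ) − Q, 0) = 0 if and only if there exists a subset S ⊆ K with Σ_{k∈S} w_k = Q. In other words, the two-cloudlet instance with equal green generation Q admits zero on-grid energy consumption exactly when the weights w_k admit an equal-sum partition. -/

import Mathlib

/-- Two-cloudlet instance with equal green generation `Q = (1/2) ∑ w` admits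
zero on-grid energy iff the weights admit an equal-sum partition. -/
theorem stmt_3 {K : Type*} [Fintype K] [DecidableEq K]
    (w : K → ℝ) (hw : ∀ k, 0 < w k) (Q : ℝ) (hQ : Q = (1 / 2) * ∑ k, w k) :
    (∃ δ : K → Fin 2,
      max ((∑ k ∈ Finset.univ.filter (fun k => δ k = 0), w k) - Q) 0 +
      max ((∑ k ∈ Finset.univ.filter (fun k => δ k = 1), w k) - Q) 0 = 0) ↔
    ∃ S : Finset K, ∑ k ∈ S, w k = Q := by
  constructor
  · rintro ⟨δ, hδ⟩
    refine ⟨Finset.univ.filter (fun k => δ k = 0), ?_⟩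
    have hsplit : (∑ k ∈ Finset.univ.filter (fun k => δ k = 0), w k) +
        (∑ k ∈ Finset.univ.filter (fun k => δ k = 1), w k) = ∑ k, w k := by
      rw [← Finset.sum_filter_add_sum_filter_not Finset.univ (fun k => δ k = 0) w]
      congr 1
      apply Finset.sum_congr _ (fun _ _ => rfl)
      ext k
      simp only [Finset.mem_filter, Finset.mem_univ, true_and, Fin.ext_iff, Fin.val_zero, Fin.val_one]
      have := (δ k).isLt
      omega
    have h0 := le_max_right ((∑ k ∈ Finset.univ.filter (fun k => δ k = 0), w k) - Q) 0
    have h1 := le_max_right ((∑ k ∈ Finset.univ.filter (fun k => δ k = 1), w k) - Q) 0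
    have hm0 : max ((∑ k ∈ Finset.univ.filter (fun k => δ k = 0), w k) - Q) 0 = 0 := by
      linarith
    have hm1 : max ((∑ k ∈ Finset.univ.filter (fun k => δ k = 1), w k) - Q) 0 = 0 := by
      linarith
    have le0 : (∑ k ∈ Finset.univ.filter (fun k => δ k = 0), w k) - Q ≤ 0 :=
      hm0 ▸ le_max_left _ _
    have le1 : (∑ k ∈ Finset.univ.filter (fun k => δ k = 1), w k) - Q ≤ 0 :=
      hm1 ▸ le_max_left _ _
    linarith
  · rintro ⟨S, hS⟩
    refine ⟨fun k => if k ∈ S then 0 else 1, ?_⟩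
    have e0 : Finset.univ.filter (fun k => (if k ∈ S then (0 : Fin 2) else 1) = 0) = S := by
      ext k; by_cases h : k ∈ S <;> simp [h]
    have e1 : Finset.univ.filter (fun k => (if k ∈ S then (0 : Fin 2) else 1) = 1) = Sᶜ := by
      ext k; by_cases h : k ∈ S <;> simp [h]
    have hc : ∑ k ∈ Sᶜ, w k = Q := by
      have := Finset.sum_add_sum_compl S w
      linarith
    rw [e0, e1, hS, hc]
    simp
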